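/- The Banzhaf GCM does not satisfy Set Inclusion: there exist a makespan function v satisfying (S1)–(S4), a finite set T, and sets T1 ⊆ T2 of transactions disjoint from T such that gas^B_{T∪T1}(T1) > gas^B_{T∪T2}(T2). In particular, for T = ∅, T1 = {tx1, tx2}, T2 = {tx1, tx2, tx3} with tx1 ≃ (1,{k1}), tx2 ≃ (1,{k1}), tx3 ≃ (1,{k2}) and v the optimal-scheduler makespan on at least 2 threads, gas^B_{T1}(T1) = 2 > 7/4 = gas^B_{T2}(T2). -/
import Mathlib


/-- The Banzhaf GCM: `gas^B_T(tx) = (1/2^{n−1}) Σ_{S ⊆ T\{tx}} [v(S∪{tx}) − v(S)]`. -/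
noncomputable def banzhafGas {Tx : Type} [DecidableEq Tx]
    (v : Finset Tx → ℝ) (T : Finset Tx) (tx : Tx) : ℝ :=
  (1 / 2 ^ (T.card - 1)) * ∑ S ∈ (T.erase tx).powerset, (v (insert tx S) - v S)

/-- Execution times of `tx1 ≃ (1,{k1})`, `tx2 ≃ (1,{k1})`, `tx3 ≃ (1,{k2})`
(indices `0,1,2`). -/
noncomputable def tTx14 : Fin 3 → ℝ := ![1, 1, 1]

/-- Storage key sets (keys `k1 = 0`, `k2 = 1`). -/
def keysTx14 : Fin 3 → Finset (Fin 2) := ![{0}, {0}, {1}]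

def vN : Finset (Fin 3) → ℕ := fun S =>
  if 0 ∈ S ∧ 1 ∈ S then 2 else if S = ∅ then 0 else 1

noncomputable def vR : Finset (Fin 3) → ℝ := fun S => (vN S : ℝ)

lemma tTx14_eq (x : Fin 3) : tTx14 x = 1 := by fin_cases x <;> simp [tTx14]

lemma vN_mono : ∀ A B : Finset (Fin 3), A ⊆ B → vN A ≤ vN B := by decide

lemma vN_s3 : ∀ (T : Finset (Fin 3)) (a b : Fin 3), a ∉ T → b ∉ T →
    keysTx14 a ⊆ keysTx14 b → vN (insert a T) ≤ vN (insert b T) := by decide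

lemma gas_eval (T : Finset (Fin 3)) (tx : Fin 3) :
    banzhafGas vR T tx = (1 / 2 ^ (T.card - 1)) *
      (((∑ S ∈ (T.erase tx).powerset, vN (insert tx S) : ℕ) : ℝ)
        - ((∑ S ∈ (T.erase tx).powerset, vN S : ℕ) : ℝ)) := by
  simp [banzhafGas, vR, Finset.sum_sub_distrib, Nat.cast_sum]

lemma sumA : (∑ tx ∈ ({0, 1} : Finset (Fin 3)), banzhafGas vR ({0, 1} : Finset (Fin 3)) tx) = 2 := by
  rw [show ({0,1}:Finset (Fin 3)) = insert 0 {1} from rfl,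
        Finset.sum_insert (by decide), Finset.sum_singleton, gas_eval, gas_eval,
        show ∑ S ∈ (((insert 0 {1}):Finset (Fin 3)).erase 0).powerset, vN (insert 0 S) = 3 from by decide,
        show ∑ S ∈ (((insert 0 {1}):Finset (Fin 3)).erase 0).powerset, vN S = 1 from by decide,
        show ∑ S ∈ (((insert 0 {1}):Finset (Fin 3)).erase 1).powerset, vN (insert 1 S) = 3 from by decide,
        show ∑ S ∈ (((insert 0 {1}):Finset (Fin 3)).erase 1).powerset, vN S = 1 from by decide,
        show ((insert 0 {1}) : Finset (Fin 3)).card = 2 from by decide]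
  norm_num

lemma sumB : (∑ tx ∈ ({0, 1, 2} : Finset (Fin 3)), banzhafGas vR ({0, 1, 2} : Finset (Fin 3)) tx) = 7 / 4 := by
  rw [show ({0,1,2}:Finset (Fin 3)) = insert 0 (insert 1 {2}) from rfl,
        Finset.sum_insert (by decide), Finset.sum_insert (by decide), Finset.sum_singleton,
        gas_eval, gas_eval, gas_eval,
        show ∑ S ∈ ((insert 0 (insert 1 {2}) :Finset (Fin 3)).erase 0).powerset, vN (insert 0 S) = 6 from by decide,
        show ∑ S ∈ ((insert 0 (insert 1 {2}) :Finset (Fin 3)).erase 0).powerset, vN S = 3 from by decide,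
        show ∑ S ∈ ((insert 0 (insert 1 {2}) :Finset (Fin 3)).erase 1).powerset, vN (insert 1 S) = 6 from by decide,
        show ∑ S ∈ ((insert 0 (insert 1 {2}) :Finset (Fin 3)).erase 1).powerset, vN S = 3 from by decide,
        show ∑ S ∈ ((insert 0 (insert 1 {2}) :Finset (Fin 3)).erase 2).powerset, vN (insert 2 S) = 5 from by decide,
        show ∑ S ∈ ((insert 0 (insert 1 {2}) :Finset (Fin 3)).erase 2).powerset, vN S = 4 from by decide,
        show (insert 0 (insert 1 {2}) : Finset (Fin 3)).card = 3 from by decide]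
  norm_num

/-- The Banzhaf GCM does not satisfy Set Inclusion: there are a
makespan function `v` satisfying (S1)–(S4) (the optimal-scheduler makespan on
at least 2 threads), the set `T = ∅`, and sets `T1 = {tx1,tx2} ⊆ T2 =
{tx1,tx2,tx3}` disjoint from `T` with
`gas^B_{T1}(T1) = 2 > 7/4 = gas^B_{T2}(T2)`. -/
theorem banzhafGas_not_set_inclusion :
    ∃ v : Finset (Fin 3) → ℝ,
      -- (S1) monotonicity in T
      (∀ A B : Finset (Fin 3), A ⊆ B → v A ≤ v B) ∧
      -- (S2) monotonicity under bundling
      (∀ (T : Finset (Fin 3)) (a b c : Fin 3), a ∉ T → b ∉ T → c ∉ T → a ≠ b →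
        tTx14 c = tTx14 a + tTx14 b → keysTx14 c = keysTx14 a ∪ keysTx14 b →
        v (insert a (insert b T)) ≤ v (insert c T)) ∧
      -- (S3) monotonicity in t and K
      (∀ (T : Finset (Fin 3)) (a b : Fin 3), a ∉ T → b ∉ T →
        tTx14 a ≤ tTx14 b → keysTx14 a ⊆ keysTx14 b →
        v (insert a T) ≤ v (insert b T)) ∧
      -- (S4) empty set
      v ∅ = 0 ∧
      -- T1 ⊆ T2
      ({0, 1} : Finset (Fin 3)) ⊆ ({0, 1, 2} : Finset (Fin 3)) ∧
      -- the total gas values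
      (∑ tx ∈ ({0, 1} : Finset (Fin 3)),
          banzhafGas v ({0, 1} : Finset (Fin 3)) tx) = 2 ∧
      (∑ tx ∈ ({0, 1, 2} : Finset (Fin 3)),
          banzhafGas v ({0, 1, 2} : Finset (Fin 3)) tx) = 7 / 4 ∧
      (∑ tx ∈ ({0, 1} : Finset (Fin 3)),
          banzhafGas v ({0, 1} : Finset (Fin 3)) tx)
        > (∑ tx ∈ ({0, 1, 2} : Finset (Fin 3)),
            banzhafGas v ({0, 1, 2} : Finset (Fin 3)) tx) := by
  refine ⟨vR, ?_, ?_, ?_, ?_, ?_, ?_, ?_, ?_⟩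
  · intro A B h; simp only [vR]; exact_mod_cast vN_mono A B h
  · intro T a b c _ _ _ _ ht _
    rw [tTx14_eq, tTx14_eq, tTx14_eq] at ht; norm_num at ht
  · intro T a b ha hb _ hk; simp only [vR]; exact_mod_cast vN_s3 T a b ha hb hk
  · simp [vR, vN]
  · decide
  · exact sumA
  · exact sumB
  · rw [sumA, sumB]; norm_num
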